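/- arXiv:2008.02370 — 5 statements merged into one kernel-verified Lean document; each statement's English description precedes it below -/
import Mathlib

section
/- There is no pair of functions A : Fin m → (Fin n → {±1}) and B : Fin n → (Fin m → {±1}) such that (i) for every row x, ∏_j A(x)(j) = α(x), (ii) for every column y, ∏_i B(y)(i) = β(y), and (iii) A(x)(y) = B(y)(x) for all x, y — whenever the game parameters satisfy (∏_i α(i)) · (∏_j β(j)) = -1. In particular, no deterministic classical strategy wins an m×n magic rectangle game with certainty. -/
theorem stmt2 {m n : ℕ} (α : Fin m → ℤ) (β : Fin n → ℤ)
    (hα : ∀ i, α i = 1 ∨ α i = -1) (hβ : ∀ j, β j = 1 ∨ β j = -1)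
    (hprod : (∏ i, α i) * (∏ j, β j) = -1) :
    ¬ ∃ (A : Fin m → Fin n → ℤ) (B : Fin n → Fin m → ℤ),
      (∀ x y, A x y = 1 ∨ A x y = -1) ∧ (∀ y x, B y x = 1 ∨ B y x = -1) ∧
      (∀ x, ∏ y, A x y = α x) ∧ (∀ y, ∏ x, B y x = β y) ∧
      (∀ x y, A x y = B y x) := by
  rintro ⟨A, B, _, _, hA, hB, hAB⟩
  have h1 : ∏ x, ∏ y, A x y = ∏ i, α i := Finset.prod_congr rfl (fun x _ => hA x)
  have h2 : ∏ x, ∏ y, A x y = ∏ j, β j := by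
    rw [Finset.prod_comm]
    refine Finset.prod_congr rfl (fun y _ => ?_)
    rw [← hB y]
    exact Finset.prod_congr rfl (fun x _ => hAB x y)
  rw [← h1, ← h2, ← sq] at hprod
  nlinarith [sq_nonneg (∏ x, ∏ y, A x y)]
end

section
/- For an m×n magic rectangle game with parameters α, β satisfying ∏α · ∏β = -1, there exist functions A : Fin m → Fin n → {±1} (each row x having product α(x)) and B : Fin n → Fin m → {±1} (each column y having product β(y)) such that A(x)(y) = B(y)(x) for all but exactly one pair (x, y). Consequently, the optimal deterministic classical win probability, with rows and columns chosen uniformly at random, is exactly 1 − 1/(mn). -/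
theorem stmt3 {m n : ℕ} (hm : 1 ≤ m) (hn : 1 ≤ n)
    (α : Fin m → ℤ) (β : Fin n → ℤ)
    (hα : ∀ i, α i = 1 ∨ α i = -1) (hβ : ∀ j, β j = 1 ∨ β j = -1)
    (hprod : (∏ i, α i) * (∏ j, β j) = -1) :
    ∃ (A : Fin m → Fin n → ℤ) (B : Fin n → Fin m → ℤ),
      (∀ x y, A x y = 1 ∨ A x y = -1) ∧ (∀ y x, B y x = 1 ∨ B y x = -1) ∧
      (∀ x, ∏ y, A x y = α x) ∧ (∀ y, ∏ x, B y x = β y) ∧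
      (∃! p : Fin m × Fin n, A p.1 p.2 ≠ B p.2 p.1) ∧
      ((Finset.univ.filter fun p : Fin m × Fin n => A p.1 p.2 = B p.2 p.1).card : ℝ)
          / (m * n) = 1 - 1 / (m * n) := by
  classical
  set Lm : Fin m := ⟨m - 1, by omega⟩ with hLmdef
  set Ln : Fin n := ⟨n - 1, by omega⟩ with hLndef
  set P : ℤ := ∏ y ∈ Finset.univ.erase Ln, β y with hP
  set Q : ℤ := ∏ x ∈ Finset.univ.erase Lm, α x with hQ
  have hPsq : P * P = 1 := by
    rw [hP, ← Finset.prod_mul_distrib]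
    exact Finset.prod_eq_one fun j _ => by rcases hβ j with h | h <;> rw [h] <;> ring
  have hQsq : Q * Q = 1 := by
    rw [hQ, ← Finset.prod_mul_distrib]
    exact Finset.prod_eq_one fun j _ => by rcases hα j with h | h <;> rw [h] <;> ring
  have hPpm : P = 1 ∨ P = -1 := mul_self_eq_one_iff.mp hPsq
  have hQpm : Q = 1 ∨ Q = -1 := mul_self_eq_one_iff.mp hQsq
  set A : Fin m → Fin n → ℤ := fun x y =>
    if x = Lm then (if y = Ln then α x * P else β y) else (if y = Ln then α x else 1) with hA
  set B : Fin n → Fin m → ℤ := fun y x =>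
    if y = Ln then (if x = Lm then β y * Q else α x) else (if x = Lm then β y else 1) with hB
  have hprod' : (α Lm * Q) * (β Ln * P) = -1 := by
    rw [Finset.mul_prod_erase _ α (Finset.mem_univ Lm),
      Finset.mul_prod_erase _ β (Finset.mem_univ Ln)]
    exact hprod
  have hne : A Lm Ln ≠ B Ln Lm := by
    simp only [hA, hB, if_pos rfl, if_true]
    intro h
    have h2 : (α Lm * P) * (β Ln * Q) = -1 := by
      rw [show (α Lm * P) * (β Ln * Q) = (α Lm * Q) * (β Ln * P) by ring]; exact hprod'
    rw [h] at h2
    rcases hβ Ln with hb | hb <;> rw [hb] at h2 <;> rcases hQpm with hq | hq <;>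
      rw [hq] at h2 <;> norm_num at h2
  have heq : ∀ p : Fin m × Fin n, p ≠ (Lm, Ln) → A p.1 p.2 = B p.2 p.1 := by
    rintro ⟨x, y⟩ hp
    by_cases hx : x = Lm <;> by_cases hy : y = Ln
    · exact absurd (by rw [hx, hy]) hp
    · simp [hA, hB, hx, hy]
    · simp [hA, hB, hx, hy]
    · simp [hA, hB, hx, hy]
  refine ⟨A, B, ?_, ?_, ?_, ?_, ?_, ?_⟩
  · intro x y
    simp only [hA]
    split_ifs with h1 h2 h3
    · rcases hα x with h | h <;> rcases hPpm with h' | h' <;> rw [h, h'] <;> norm_num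
    · exact hβ y
    · exact hα x
    · exact Or.inl rfl
  · intro y x
    simp only [hB]
    split_ifs with h1 h2 h3
    · rcases hβ y with h | h <;> rcases hQpm with h' | h' <;> rw [h, h'] <;> norm_num
    · exact hα x
    · exact hβ y
    · exact Or.inl rfl
  · intro x
    by_cases hx : x = Lm
    · subst hx
      have : ∏ y, A Lm y = A Lm Ln * ∏ y ∈ Finset.univ.erase Ln, A Lm y :=
        (Finset.mul_prod_erase _ _ (Finset.mem_univ Ln)).symm
      rw [this]
      have h1 : ∏ y ∈ Finset.univ.erase Ln, A Lm y = P := by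
        rw [hP]
        refine Finset.prod_congr rfl fun y hy => ?_
        simp only [hA, if_pos rfl, if_neg (Finset.ne_of_mem_erase hy)]
      rw [h1]
      simp only [hA, if_pos rfl, if_true]
      rw [show α Lm * P * P = α Lm * (P * P) by ring, hPsq, mul_one]
    · have : ∏ y, A x y = A x Ln * ∏ y ∈ Finset.univ.erase Ln, A x y :=
        (Finset.mul_prod_erase _ _ (Finset.mem_univ Ln)).symm
      rw [this]
      have h1 : ∏ y ∈ Finset.univ.erase Ln, A x y = 1 :=
        Finset.prod_eq_one fun y hy => by
          simp only [hA, if_neg hx, if_neg (Finset.ne_of_mem_erase hy)]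
      rw [h1]
      simp [hA, hx]
  · intro y
    by_cases hy : y = Ln
    · subst hy
      have : ∏ x, B Ln x = B Ln Lm * ∏ x ∈ Finset.univ.erase Lm, B Ln x :=
        (Finset.mul_prod_erase _ _ (Finset.mem_univ Lm)).symm
      rw [this]
      have h1 : ∏ x ∈ Finset.univ.erase Lm, B Ln x = Q := by
        rw [hQ]
        refine Finset.prod_congr rfl fun x hx => ?_
        simp only [hB, if_pos rfl, if_neg (Finset.ne_of_mem_erase hx)]
      rw [h1]
      simp only [hB, if_pos rfl, if_true]
      rw [show β Ln * Q * Q = β Ln * (Q * Q) by ring, hQsq, mul_one]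
    · have : ∏ x, B y x = B y Lm * ∏ x ∈ Finset.univ.erase Lm, B y x :=
        (Finset.mul_prod_erase _ _ (Finset.mem_univ Lm)).symm
      rw [this]
      have h1 : ∏ x ∈ Finset.univ.erase Lm, B y x = 1 :=
        Finset.prod_eq_one fun x hx => by
          simp only [hB, if_neg hy, if_neg (Finset.ne_of_mem_erase hx)]
      rw [h1]
      simp [hB, hy]
  · refine ⟨(Lm, Ln), hne, fun p hp => ?_⟩
    by_contra hpne
    exact hp (heq p hpne)
  · have hset : (Finset.univ.filter fun p : Fin m × Fin n => A p.1 p.2 = B p.2 p.1)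
        = Finset.univ.erase (Lm, Ln) := by
      ext p
      simp only [Finset.mem_filter, Finset.mem_univ, true_and, Finset.mem_erase, and_true]
      constructor
      · intro h hpe
        subst hpe
        exact hne h
      · exact heq p
    rw [hset, Finset.card_erase_of_mem (Finset.mem_univ _)]
    have hcard : (Finset.univ : Finset (Fin m × Fin n)).card = m * n := by
      simp [Finset.card_univ]
    rw [hcard]
    have hmn : 1 ≤ m * n := Nat.one_le_iff_ne_zero.mpr (by positivity)
    have hmnR : (m : ℝ) * n ≠ 0 := by
      have : (0 : ℝ) < m * n := by
        have := hm; have := hn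
        positivity
      linarith
    rw [Nat.cast_sub hmn]
    push_cast
    field_simp
end

section
/- Consider any nonsignaling behavior for a 1×n magic rectangle game (n ≥ 1) with parameters α ∈ {±1} and β : Fin n → {±1} satisfying α · ∏_j β(j) = -1. Then the probability of winning (with Bob's column input uniform on Fin n and Alice's input trivial) is at most 1 − 1/n. Hence the nonsignaling value of any 1×n game equals the classical value 1 − 1/n. -/
theorem stmt4 {n : ℕ} (hn : 1 ≤ n) (α : ℤˣ) (β : Fin n → ℤˣ)
    (hprod : α * ∏ j, β j = -1)
    (w : (Fin n → ℤˣ) → ℝ) (hw0 : ∀ a, 0 ≤ w a)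
    (hw1 : ∑ a : Fin n → ℤˣ, w a = 1)
    (hsupp : ∀ a, w a ≠ 0 → ∏ j, a j = α) :
    (1 / n : ℝ) * ∑ y : Fin n, ∑ a : Fin n → ℤˣ,
        w a * (if a y = β y then 1 else 0) ≤ 1 - 1 / n := by
  have hn0 : (0:ℝ) < n := by exact_mod_cast hn
  have key : ∀ a : Fin n → ℤˣ, w a * (∑ y, (if a y = β y then (1:ℝ) else 0))
      ≤ w a * (n - 1) := by
    intro a
    rcases eq_or_ne (w a) 0 with h | h
    · simp [h]
    · apply mul_le_mul_of_nonneg_left _ (hw0 a)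
      have hne : ∃ y, a y ≠ β y := by
        by_contra hc
        push_neg at hc
        have he : (∏ j, a j) = ∏ j, β j := Finset.prod_congr rfl (fun j _ => hc j)
        rw [hsupp a h] at he
        rw [← he, Int.units_mul_self] at hprod
        exact absurd hprod (by decide)
      obtain ⟨y0, hy0⟩ := hne
      calc ∑ y, (if a y = β y then (1:ℝ) else 0)
          ≤ ∑ y, (if y = y0 then 0 else 1) := by
            apply Finset.sum_le_sum
            intro y _
            by_cases hy : y = y0 <;> simp [hy, hy0]
            split <;> norm_num
        _ = n - 1 := by
            have hr : ∀ y : Fin n, (if y = y0 then (0:ℝ) else 1)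
                = 1 - (if y = y0 then 1 else 0) := by intro y; split <;> ring
            rw [Finset.sum_congr rfl (fun y _ => hr y), Finset.sum_sub_distrib,
              Finset.sum_const, Finset.sum_ite_eq' Finset.univ y0 (fun _ => (1:ℝ))]
            simp
  have hmain : ∑ y : Fin n, ∑ a : Fin n → ℤˣ,
      w a * (if a y = β y then (1:ℝ) else 0) ≤ n - 1 := by
    rw [Finset.sum_comm]
    calc ∑ a : Fin n → ℤˣ, ∑ y, w a * (if a y = β y then (1:ℝ) else 0)
        = ∑ a : Fin n → ℤˣ, w a * ∑ y, (if a y = β y then (1:ℝ) else 0) := by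
          exact Finset.sum_congr rfl fun a _ => (Finset.mul_sum _ _ _).symm
      _ ≤ ∑ a : Fin n → ℤˣ, w a * (n - 1) := Finset.sum_le_sum (fun a _ => key a)
      _ = (n - 1) := by rw [← Finset.sum_mul, hw1, one_mul]
  have h1 : (1 / n : ℝ) * (n - 1) = 1 - 1 / n := by field_simp
  calc (1 / n : ℝ) * ∑ y : Fin n, ∑ a : Fin n → ℤˣ,
        w a * (if a y = β y then 1 else 0)
      ≤ (1 / n : ℝ) * (n - 1) := by
        apply mul_le_mul_of_nonneg_left hmain (by positivity)
    _ = 1 - 1 / n := h1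
end

section
/- For any m×n magic rectangle game with parameters α, β satisfying ∏α·∏β = -1, and any sequences a ∈ {±1}^m, b ∈ {±1}^n satisfying a_1 = b_1, ∏_{i=1}^m a_i = β_1, and ∏_{j=1}^n b_j = α_1, the derived parameters α'_i := a_{i+1}·α_{i+1} (for 1 ≤ i ≤ m−1) and β'_j := b_{j+1}·β_{j+1} (for 1 ≤ j ≤ n−1) satisfy (∏_{i=1}^{m-1} α'_i)·(∏_{j=1}^{n-1} β'_j) = -1, i.e., they specify a valid (m−1)×(n−1) magic rectangle game. -/
theorem stmt8 {m n : ℕ} (a α : Fin (m + 2) → ℤ) (b β : Fin (n + 2) → ℤ)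
    (ha : ∀ i, a i = 1 ∨ a i = -1) (hα : ∀ i, α i = 1 ∨ α i = -1)
    (hb : ∀ j, b j = 1 ∨ b j = -1) (hβ : ∀ j, β j = 1 ∨ β j = -1)
    (hprod : (∏ i, α i) * (∏ j, β j) = -1)
    (hab : a 0 = b 0)
    (hpa : ∏ i, a i = β 0) (hpb : ∏ j, b j = α 0) :
    (∏ i : Fin (m + 1), a i.succ * α i.succ) *
      (∏ j : Fin (n + 1), b j.succ * β j.succ) = -1 := by
  have ha2 : a 0 * a 0 = 1 := by rcases ha 0 with h | h <;> rw [h] <;> ring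
  have hα2 : α 0 * α 0 = 1 := by rcases hα 0 with h | h <;> rw [h] <;> ring
  have hb2 : b 0 * b 0 = 1 := by rcases hb 0 with h | h <;> rw [h] <;> ring
  have hβ2 : β 0 * β 0 = 1 := by rcases hβ 0 with h | h <;> rw [h] <;> ring
  rw [Finset.prod_mul_distrib, Finset.prod_mul_distrib]
  have h1 := Fin.prod_univ_succ a
  have h2 := Fin.prod_univ_succ α
  have h3 := Fin.prod_univ_succ b
  have h4 := Fin.prod_univ_succ β
  rw [h2, h4] at hprod
  rw [h1] at hpa
  rw [h3] at hpb
  set A := ∏ i : Fin (m + 1), a i.succ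
  set B := ∏ j : Fin (n + 1), b j.succ
  set C := ∏ i : Fin (m + 1), α i.succ
  set D := ∏ j : Fin (n + 1), β j.succ
  have hA : A = a 0 * β 0 := by
    have := congrArg (a 0 * ·) hpa; simpa [← mul_assoc, ha2] using this
  have hB : B = b 0 * α 0 := by
    have := congrArg (b 0 * ·) hpb; simpa [← mul_assoc, hb2] using this
  rw [hA, hB, hab]
  nlinarith [hprod, hb2, hα2, hβ2]
end

section
/- Distinguished-input value formula (strategy direction): for m, n ≥ 2 and any level of correlations with optimal m'×n' win probability ω(m', n'), there exists a strategy for the m×n game that is deterministic on one distinguished input and wins with probability exactly 1 − ((m−1)(n−1)/(mn))·(1 − ω(m−1, n−1)). In the classical deterministic setting with ω(m−1,n−1) = 1 − 1/((m−1)(n−1)), this probability is 1 − 1/(mn). -/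
theorem stmt17 {M N : ℕ}
    (A' : Fin (M + 1) → Fin (N + 1) → ℤ) (B' : Fin (N + 1) → Fin (M + 1) → ℤ)
    (α' : Fin (M + 1) → ℤ) (β' : Fin (N + 1) → ℤ)
    (hA' : ∀ x y, A' x y = 1 ∨ A' x y = -1)
    (hB' : ∀ y x, B' y x = 1 ∨ B' y x = -1)
    (hrow' : ∀ x, ∏ y, A' x y = α' x) (hcol' : ∀ y, ∏ x, B' y x = β' y)
    (hprod' : (∏ i, α' i) * (∏ j, β' j) = -1)
    (k : ℕ)
    (hk : (Finset.univ.filter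
        fun p : Fin (M + 1) × Fin (N + 1) => A' p.1 p.2 = B' p.2 p.1).card = k) :
    ∃ (A : Fin (M + 2) → Fin (N + 2) → ℤ) (B : Fin (N + 2) → Fin (M + 2) → ℤ),
      (∀ x y, A x y = 1 ∨ A x y = -1) ∧ (∀ y x, B y x = 1 ∨ B y x = -1) ∧
      -- row 1 and column 1 products are +1
      (∏ y, A 0 y = 1) ∧ (∏ x, B 0 x = 1) ∧
      -- remaining row and column products are those of the smaller game
      (∀ x : Fin (M + 1), ∏ y, A x.succ y = α' x) ∧
      (∀ y : Fin (N + 1), ∏ x, B y.succ x = β' y) ∧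
      -- first entries of all outputs are +1
      (∀ x, A x 0 = 1) ∧ (∀ y, B y 0 = 1) ∧
      (∀ y, A 0 y = 1) ∧ (∀ x, B 0 x = 1) ∧
      -- the strategy wins on exactly (m + n − 1) + k of the mn inputs
      (Finset.univ.filter
          fun p : Fin (M + 2) × Fin (N + 2) => A p.1 p.2 = B p.2 p.1).card
        = ((M + 2) + (N + 2) - 1) + k := by
  refine ⟨Fin.cases (fun _ => 1) (fun x => Fin.cases 1 (A' x)),
          Fin.cases (fun _ => 1) (fun y => Fin.cases 1 (B' y)),
          ?_, ?_, ?_, ?_, ?_, ?_, ?_, ?_, ?_, ?_, ?_⟩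
  · intro x y
    induction x using Fin.cases with
    | zero => simp
    | succ x =>
      induction y using Fin.cases with
      | zero => simp
      | succ y => simpa using hA' x y
  · intro y x
    induction y using Fin.cases with
    | zero => simp
    | succ y =>
      induction x using Fin.cases with
      | zero => simp
      | succ x => simpa using hB' y x
  · simp
  · simp
  · intro x
    rw [Fin.prod_univ_succ]
    simpa using hrow' x
  · intro y
    rw [Fin.prod_univ_succ]
    simpa using hcol' y
  · intro x; induction x using Fin.cases <;> simp
  · intro y; induction y using Fin.cases <;> simp
  · intro y; simp
  · intro x; simp
  · have key : (Finset.univ.filter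
        fun p : Fin (M + 2) × Fin (N + 2) =>
          (Fin.cases (fun _ => (1:ℤ)) (fun x => Fin.cases 1 (A' x)) : Fin (M+2) → Fin (N+2) → ℤ) p.1 p.2
          = (Fin.cases (fun _ => (1:ℤ)) (fun y => Fin.cases 1 (B' y)) : Fin (N+2) → Fin (M+2) → ℤ) p.2 p.1)
        = (({0} ×ˢ Finset.univ) ∪ (Finset.univ ×ˢ {0})) ∪
          (Finset.univ.filter
            fun p : Fin (M + 1) × Fin (N + 1) => A' p.1 p.2 = B' p.2 p.1).image
            (fun q => (q.1.succ, q.2.succ)) := by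
      ext ⟨x, y⟩
      induction x using Fin.cases with
      | zero =>
        induction y using Fin.cases with
        | zero => simp
        | succ y => simp
      | succ x =>
        induction y using Fin.cases with
        | zero => simp
        | succ y =>
          simp only [Finset.mem_filter, Finset.mem_univ, true_and, Fin.cases_succ,
            Finset.mem_union, Finset.mem_product, Finset.mem_singleton, Finset.mem_image]
          constructor
          · intro h
            right
            exact ⟨(x, y), by simpa using h, rfl⟩
          · rintro (h | ⟨⟨a, b⟩, hab, heq⟩)
            · rcases h with ⟨h, _⟩ | ⟨_, h⟩ <;> exact absurd h (Fin.succ_ne_zero _)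
            · obtain ⟨h1, h2⟩ := Prod.mk.injEq .. ▸ heq
              rw [Fin.succ_inj] at h1 h2
              subst h1; subst h2
              simpa using hab
    have hinter : (({0} ×ˢ Finset.univ) ∩ (Finset.univ ×ˢ {0}) :
        Finset (Fin (M + 2) × Fin (N + 2))) = {(0, 0)} := by
      ext ⟨x, y⟩; simp [Prod.ext_iff, eq_comm, and_comm]
    have hcard : (({0} ×ˢ Finset.univ) ∪ (Finset.univ ×ˢ {0}) :
        Finset (Fin (M + 2) × Fin (N + 2))).card = (M + 2) + (N + 2) - 1 := by
      have := Finset.card_union_add_card_inter ({0} ×ˢ (Finset.univ : Finset (Fin (N+2))))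
        ((Finset.univ : Finset (Fin (M+2))) ×ˢ {0})
      rw [hinter] at this
      simp only [Finset.card_product, Finset.card_singleton, Finset.card_univ,
        Fintype.card_fin, one_mul, mul_one] at this
      omega
    rw [key, Finset.card_union_of_disjoint, Finset.card_image_of_injective _ ?_, hcard, hk]
    · rintro ⟨a, b⟩ ⟨c, d⟩ h
      simpa [Prod.ext_iff, Fin.succ_inj] using h
    · rw [Finset.disjoint_left]
      rintro ⟨x, y⟩ hmem himg
      simp only [Finset.mem_image, Finset.mem_filter] at himg
      obtain ⟨⟨a, b⟩, _, heq⟩ := himg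
      obtain ⟨h1, h2⟩ := Prod.mk.injEq .. ▸ heq
      subst h1; subst h2
      simp only [Finset.mem_union, Finset.mem_product, Finset.mem_singleton] at hmem
      rcases hmem with ⟨h, _⟩ | ⟨_, h⟩ <;> exact Fin.succ_ne_zero _ h
end
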